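/- Let G be a finite connected weighted graph with positive edge weights, total weight W, and let π be the stationary distribution π_u = (Σ_{v: uv∈E} w_{uv})/(2W). For any nonempty M ⊆ V, the average hitting time of the weighted random walk satisfies H_{π,M} = 2W·R_{π,M}, where R_{π,M} is the effective resistance from π to M. -/

import Mathlib

noncomputable section

variable {V : Type*} [Fintype V]

/-- A flow from `σ` to `M`: antisymmetric, supported on edges, with net outflow
`σ u` at every unmarked vertex. -/
def IsFlow (wt : V → V → ℝ) (σ : V → ℝ) (M : Set V) (p : V → V → ℝ) : Prop :=
  (∀ u v, p v u = -p u v) ∧ (∀ u v, p u v ≠ 0 → 0 < wt u v) ∧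
    (∀ u ∉ M, ∑ v, p u v = σ u)

/-- The energy `Σ_e p_e²/w_e` of a flow (each undirected edge counted once). -/
def flowEnergy (wt p : V → V → ℝ) : ℝ :=
  (1 / 2) * ∑ u, ∑ v, (p u v) ^ 2 / wt u v

/-- The effective resistance `R_{σ,M}`. -/
def effRes (wt : V → V → ℝ) (σ : V → ℝ) (M : Set V) : ℝ :=
  sInf {x | ∃ p, IsFlow wt σ M p ∧ x = flowEnergy wt p}

/-- For a finite connected weighted graph with stationary distribution `π` and
nonempty `M ⊆ V`, the average hitting time satisfies `H_{π,M} = 2W·R_{π,M}`.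
Hitting times are characterized by their standard recurrence: `H u = 0` on `M`
and `H u = 1 + Σ_v (w_{uv}/deg u)·H v` off `M`. -/
theorem average_hitting_time_eq_resistance
    [Nonempty V]
    (wt : V → V → ℝ)
    (hsymm : ∀ u v, wt u v = wt v u) (hnonneg : ∀ u v, 0 ≤ wt u v)
    (hloop : ∀ u, wt u u = 0)
    (hconn : ∀ u v, Relation.ReflTransGen (fun a b => 0 < wt a b) u v)
    (W : ℝ) (hW : W = (1 / 2) * ∑ u, ∑ v, wt u v) (hWpos : 0 < W)
    (π : V → ℝ) (hπ : ∀ u, π u = (∑ v, wt u v) / (2 * W))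
    (M : Set V) (hM : M.Nonempty)
    (H : V → ℝ)
    (hHM : ∀ u ∈ M, H u = 0)
    (hHrec : ∀ u ∉ M, H u = 1 + ∑ v, (wt u v / ∑ z, wt u z) * H v) :
    ∑ u, π u * H u = 2 * W * effRes wt π M := by
  classical
  have hW2 : (2 : ℝ) * W ≠ 0 := by positivity
  set P : V → V → ℝ := fun u v => wt u v * (H u - H v) / (2 * W) with hPdef
  -- degree-zero vertices have all incident weights zero
  have hdegzero : ∀ u : V, (∑ z, wt u z) = 0 → ∀ v, wt u v = 0 := by
    intro u h0 v
    exact (Finset.sum_eq_zero_iff_of_nonneg (fun z _ => hnonneg u z)).mp h0 v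
      (Finset.mem_univ v)
  -- key: off M with positive degree, total "current" out of u equals its degree
  have hkey : ∀ u ∉ M, (∑ z, wt u z) ≠ 0 →
      (∑ v, wt u v * (H u - H v)) = ∑ z, wt u z := by
    intro u hu hdne
    have hrec := hHrec u hu
    have h1 : H u * (∑ z, wt u z) = (∑ z, wt u z) + ∑ v, wt u v * H v := by
      rw [hrec, add_mul, one_mul, Finset.sum_mul]
      congr 1
      refine Finset.sum_congr rfl fun v _ => ?_
      field_simp
    have h2 : (∑ v, wt u v * (H u - H v))
        = (∑ v, wt u v) * H u - ∑ v, wt u v * H v := by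
      rw [Finset.sum_mul]
      rw [← Finset.sum_sub_distrib]
      refine Finset.sum_congr rfl fun v _ => ?_
      ring
    rw [h2]
    linarith [h1]
  -- P is a flow from π to M
  have hPflow : IsFlow wt π M P := by
    refine ⟨fun u v => ?_, fun u v hne => ?_, fun u hu => ?_⟩
    · simp only [hPdef]
      rw [hsymm v u]; ring
    · rcases lt_or_eq_of_le (hnonneg u v) with h | h
      · exact h
      · exact absurd (by simp [hPdef, ← h]) hne
    · rcases eq_or_ne (∑ z, wt u z) 0 with hdeg | hdeg
      · have hz := hdegzero u hdeg
        simp [hPdef, hπ, hz, hdeg]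
      · calc ∑ v, P u v = (∑ v, wt u v * (H u - H v)) / (2 * W) := by
              rw [← Finset.sum_div]
          _ = (∑ z, wt u z) / (2 * W) := by rw [hkey u hu hdeg]
          _ = π u := (hπ u).symm
  have hPvt : ∀ u v, wt u v = 0 → P u v = 0 := fun u v h0 => by simp [hPdef, h0]
  -- P minimizes energy among flows
  have hlow : ∀ x ∈ {x | ∃ p, IsFlow wt π M p ∧ x = flowEnergy wt p},
      flowEnergy wt P ≤ x := by
    rintro x ⟨q, ⟨hqa, hqs, hqf⟩, rfl⟩
    set c : V → V → ℝ := fun u v => q u v - P u v with hcdef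
    have hq0 : ∀ u v, wt u v = 0 → q u v = 0 := by
      intro u v h0
      by_contra h
      exact absurd h0 (ne_of_gt (hqs u v h))
    have hc0 : ∀ u v, wt u v = 0 → c u v = 0 := by
      intro u v h0
      simp [hcdef, hq0 u v h0, hPvt u v h0]
    have hcanti : ∀ u v, c v u = -c u v := by
      intro u v
      simp only [hcdef, hqa u v, hPflow.1 u v]
      ring
    have hcS : ∀ u, H u * (∑ v, c u v) = 0 := by
      intro u
      by_cases hu : u ∈ M
      · rw [hHM u hu]; ring
      · have : ∑ v, c u v = 0 := by
          simp only [hcdef, Finset.sum_sub_distrib, hqf u hu, hPflow.2.2 u hu,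
            sub_self]
        rw [this]; ring
    -- cross term vanishes
    have hcross : ∑ u, ∑ v, P u v * c u v / wt u v = 0 := by
      have hpt : ∀ u v, P u v * c u v / wt u v = (H u - H v) * c u v / (2 * W) := by
        intro u v
        rcases eq_or_ne (wt u v) 0 with h0 | h0
        · simp [hPvt u v h0, hc0 u v h0]
        · simp only [hPdef]
          field_simp
      have hnum : ∑ u, ∑ v, (H u - H v) * c u v = 0 := by
        have hsplit : ∀ u v, (H u - H v) * c u v = H u * c u v + H v * c v u := by
          intro u v
          rw [hcanti u v]
          ring
        calc ∑ u, ∑ v, (H u - H v) * c u v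
            = (∑ u, ∑ v, H u * c u v) + ∑ u, ∑ v, H v * c v u := by
              simp only [hsplit, Finset.sum_add_distrib]
          _ = (∑ u, H u * ∑ v, c u v) + ∑ v, ∑ u, H v * c v u := by
              rw [Finset.sum_comm (f := fun u v => H v * c v u)]
              simp only [Finset.mul_sum]
          _ = (∑ u, H u * ∑ v, c u v) + ∑ v, H v * ∑ u, c v u := by
              simp only [Finset.mul_sum]
          _ = 0 := by simp only [hcS]; simp
      calc ∑ u, ∑ v, P u v * c u v / wt u v
          = ∑ u, ∑ v, (H u - H v) * c u v / (2 * W) := by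
            simp only [hpt]
        _ = (∑ u, ∑ v, (H u - H v) * c u v) / (2 * W) := by
            simp only [← Finset.sum_div]
        _ = 0 := by rw [hnum, zero_div]
    have hdecomp : ∀ u v, q u v ^ 2 / wt u v
        = P u v ^ 2 / wt u v + c u v ^ 2 / wt u v + 2 * (P u v * c u v / wt u v) := by
      intro u v
      rcases eq_or_ne (wt u v) 0 with h0 | h0
      · simp [hq0 u v h0, hPvt u v h0, hc0 u v h0]
      · have hq : q u v = P u v + c u v := by simp [hcdef]
        rw [hq]
        field_simp
        ring
    have henergy : flowEnergy wt q
        = flowEnergy wt P + flowEnergy wt c + ∑ u, ∑ v, P u v * c u v / wt u v := by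
      simp only [flowEnergy, hdecomp, Finset.sum_add_distrib, mul_add,
        ← Finset.mul_sum]
      ring
    have hcnn : 0 ≤ flowEnergy wt c := by
      apply mul_nonneg (by norm_num)
      refine Finset.sum_nonneg fun u _ => Finset.sum_nonneg fun v _ => ?_
      exact div_nonneg (sq_nonneg _) (hnonneg u v)
    rw [henergy, hcross, add_zero]
    linarith
  have hmem : flowEnergy wt P ∈ {x | ∃ p, IsFlow wt π M p ∧ x = flowEnergy wt p} :=
    ⟨P, hPflow, rfl⟩
  have heff : effRes wt π M = flowEnergy wt P :=
    le_antisymm (csInf_le ⟨flowEnergy wt P, hlow⟩ hmem)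
      (le_csInf ⟨_, hmem⟩ hlow)
  -- Dirichlet energy
  set E : ℝ := ∑ u, ∑ v, wt u v * (H u - H v) ^ 2 with hEdef
  -- per-vertex identity
  have hB : ∀ u, H u * (∑ v, wt u v * (H u - H v)) = 2 * W * π u * H u := by
    intro u
    by_cases hu : u ∈ M
    · rw [hHM u hu]; ring
    · rcases eq_or_ne (∑ z, wt u z) 0 with hdeg | hdeg
      · have hz := hdegzero u hdeg
        simp [hz, hπ, hdeg]
      · rw [hkey u hu hdeg, hπ u]
        field_simp
  have hE : E = ∑ u, 2 * (2 * W * π u * H u) := by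
    have hpt : ∀ u v : V, wt u v * (H u - H v) ^ 2
        = H u * (wt u v * (H u - H v)) + H v * (wt v u * (H v - H u)) := by
      intro u v
      rw [hsymm v u]
      ring
    calc E = ∑ u, ∑ v, (H u * (wt u v * (H u - H v)) + H v * (wt v u * (H v - H u))) := by
          simp only [hEdef, hpt]
      _ = (∑ u, ∑ v, H u * (wt u v * (H u - H v)))
          + ∑ u, ∑ v, H v * (wt v u * (H v - H u)) := by
          simp only [Finset.sum_add_distrib]
      _ = (∑ u, H u * ∑ v, wt u v * (H u - H v))
          + ∑ v, H v * ∑ u, wt v u * (H v - H u) := by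
          rw [Finset.sum_comm (f := fun u v => H v * (wt v u * (H v - H u)))]
          simp only [Finset.mul_sum]
      _ = ∑ u, 2 * (2 * W * π u * H u) := by
          simp only [hB]
          rw [← Finset.sum_add_distrib]
          refine Finset.sum_congr rfl fun u _ => ?_
          ring
  have hEπ : E = 4 * W * ∑ u, π u * H u := by
    rw [hE, Finset.mul_sum]
    refine Finset.sum_congr rfl fun u _ => ?_
    ring
  have hEP : flowEnergy wt P = E / (8 * W ^ 2) := by
    have hpt : ∀ u v : V, P u v ^ 2 / wt u v = wt u v * (H u - H v) ^ 2 / (4 * W ^ 2) := by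
      intro u v
      rcases eq_or_ne (wt u v) 0 with h0 | h0
      · simp [hPvt u v h0, h0]
      · simp only [hPdef]
        field_simp
        ring
    simp only [flowEnergy, hpt, ← Finset.sum_div, ← hEdef]
    ring
  rw [heff, hEP, hEπ]
  field_simp
  ring
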